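/- Let P be a finite partially ordered set whose width (the maximum cardinality of an antichain in P) is w. Then P can be partitioned into w chains, i.e., there exists a family of w pairwise disjoint nonempty chains of P whose union is all of P. (Dilworth's theorem; part (b) of the paper's Theorem 3.) -/

import Mathlib

open Finset

section Dilworth

variable {P : Type*} [PartialOrder P]

private lemma chain_top {T : Finset P} (hc : IsChain (· ≤ ·) (T : Set P)) (hne : T.Nonempty) :
    ∃ m ∈ T, ∀ y ∈ T, y ≤ m := by
  obtain ⟨m, hm, hmax⟩ := T.exists_maximal hne
  refine ⟨m, hm, fun y hy => ?_⟩
  rcases eq_or_ne y m with rfl | hne'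
  · exact le_refl y
  · rcases hc hy hm hne' with h | h
    · exact h
    · exact hmax hy h

private lemma meets_all {S : Finset P} {k : ℕ} {C : Fin k → Finset P}
    (hch : ∀ i, IsChain (· ≤ ·) ((C i : Set P)))
    (hdisj : ∀ i j, i ≠ j → Disjoint (C i) (C j))
    (hcov : ∀ x ∈ S, ∃ i, x ∈ C i)
    {A : Finset P} (hA : A ⊆ S) (hanti : IsAntichain (· ≤ ·) (A : Set P))
    (hcard : A.card = k) : ∀ i, ∃ x ∈ A, x ∈ C i := by
  classical
  have hfun : ∀ x : {y // y ∈ A}, ∃ i, (x : P) ∈ C i := fun x => hcov x (hA x.2)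
  choose f hf using hfun
  have hinj : Function.Injective f := by
    intro x y hxy
    by_contra hne
    have hxyne : (x : P) ≠ (y : P) := fun e => hne (Subtype.ext e)
    have hy : (y : P) ∈ C (f x) := hxy ▸ hf y
    rcases hch (f x) (hf x) hy hxyne with h | h
    · exact hanti x.2 y.2 hxyne h
    · exact hanti y.2 x.2 (Ne.symm hxyne) h
  have hbij : Function.Bijective f := by
    rw [Fintype.bijective_iff_injective_and_card]
    refine ⟨hinj, ?_⟩
    simp [Fintype.card_coe, hcard]
  intro i
  obtain ⟨x, hx⟩ := hbij.2 i
  exact ⟨x, x.2, hx ▸ hf x⟩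

private lemma dil : ∀ n : ℕ, ∀ S : Finset P, S.card ≤ n → ∀ k : ℕ,
    (∀ a : Finset P, a ⊆ S → IsAntichain (· ≤ ·) (a : Set P) → a.card ≤ k) →
    ∃ C : Fin k → Finset P, (∀ i, C i ⊆ S) ∧ (∀ i, IsChain (· ≤ ·) ((C i : Set P))) ∧
      (∀ i j, i ≠ j → Disjoint (C i) (C j)) ∧ (∀ x ∈ S, ∃ i, x ∈ C i) := by
  classical
  intro n
  induction n with
  | zero =>
    intro S hS k _
    have : S = ∅ := Finset.card_eq_zero.mp (Nat.le_zero.mp hS)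
    subst this
    exact ⟨fun _ => ∅, fun _ => by simp, fun _ => by simp [IsChain],
      fun _ _ _ => by simp, fun x hx => by simp at hx⟩
  | succ n ih =>
    intro S hS k hk
    rcases S.eq_empty_or_nonempty with rfl | hne
    · exact ⟨fun _ => ∅, fun _ => by simp, fun _ => by simp [IsChain],
        fun _ _ _ => by simp, fun x hx => by simp at hx⟩
    obtain ⟨a, haS, hamax⟩ := S.exists_maximal hne
    set S' := S.erase a with hS'def
    have hS'card : S'.card ≤ n := by
      rw [hS'def, Finset.card_erase_of_mem haS]
      omega
    have hS'sub : S' ⊆ S := Finset.erase_subset _ _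
    have haS' : a ∉ S' := Finset.notMem_erase _ _
    -- width of S'
    set F := S'.powerset.filter (fun b : Finset P => IsAntichain (· ≤ ·) (b : Set P)) with hFdef
    have hFne : F.Nonempty := ⟨∅, by
      simp [hFdef, Finset.mem_filter, Finset.empty_subset]⟩
    set w' := F.sup (fun b => b.card) with hw'def
    have hbound : ∀ b : Finset P, b ⊆ S' → IsAntichain (· ≤ ·) (b : Set P) → b.card ≤ w' := by
      intro b hb hanti
      exact Finset.le_sup (by simp [hFdef, Finset.mem_filter, Finset.mem_powerset, hb, hanti])
    obtain ⟨A, hAF, hAcard⟩ := F.exists_mem_eq_sup hFne (fun b => b.card)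
    rw [hFdef, Finset.mem_filter, Finset.mem_powerset] at hAF
    obtain ⟨hAsub, hAanti⟩ := hAF
    -- partition S' into w' chains
    obtain ⟨C, hCsub, hCch, hCdisj, hCcov⟩ := ih S' hS'card w' hbound
    have hmeet : ∀ B : Finset P, B ⊆ S' → IsAntichain (· ≤ ·) (B : Set P) → B.card = w' →
        ∀ i, ∃ x ∈ B, x ∈ C i :=
      fun B hB hanti hcard => meets_all hCch hCdisj hCcov hB hanti hcard
    -- the T i and their tops
    set T : Fin w' → Finset P := fun i => (C i).filter
      (fun x => ∃ B : Finset P, B ⊆ S' ∧ IsAntichain (· ≤ ·) (B : Set P) ∧ B.card = w' ∧ x ∈ B)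
      with hTdef
    have hTsub : ∀ i, T i ⊆ C i := fun i => Finset.filter_subset _ _
    have hTne : ∀ i, (T i).Nonempty := by
      intro i
      obtain ⟨x, hxA, hxC⟩ := hmeet A hAsub hAanti hAcard.symm i
      exact ⟨x, by simp [hTdef, hxC]; exact ⟨A, hAsub, hAanti, hAcard.symm, hxA⟩⟩
    have hTch : ∀ i, IsChain (· ≤ ·) ((T i : Set P)) :=
      fun i => (hCch i).mono (by exact_mod_cast hTsub i)
    choose m hmT hmtop using fun i => chain_top (hTch i) (hTne i)
    have hmC : ∀ i, m i ∈ C i := fun i => hTsub i (hmT i)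
    have hmS' : ∀ i, m i ∈ S' := fun i => hCsub i (hmC i)
    -- key: if m i ≤ m j for i ≠ j, contradiction
    have hkey : ∀ i j : Fin w', i ≠ j → ¬ m i ≤ m j := by
      intro i j hij hle
      obtain ⟨B, hBsub, hBanti, hBcard, hmjB⟩ := (Finset.mem_filter.mp (hmT j)).2
      obtain ⟨y, hyB, hyCi⟩ := hmeet B hBsub hBanti hBcard i
      have hyT : y ∈ T i := Finset.mem_filter.mpr ⟨hyCi, B, hBsub, hBanti, hBcard, hyB⟩
      have hymi : y ≤ m i := hmtop i y hyT
      have hynej : y ≠ m j := by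
        intro e
        exact (Finset.disjoint_left.mp (hCdisj i j hij) hyCi) (e ▸ hmC j)
      exact hBanti hyB hmjB hynej (le_trans hymi hle)
    by_cases hcase : ∃ i, m i ≤ a
    · -- Case 2
      obtain ⟨i₀, hi₀⟩ := hcase
      have hw'pos : 1 ≤ w' := i₀.pos
      set K : Finset P := insert a ((C i₀).filter (fun x => x ≤ m i₀)) with hKdef
      have haK : a ∈ K := Finset.mem_insert_self _ _
      have hKsub : K ⊆ S := by
        intro x hx
        rw [hKdef, Finset.mem_insert] at hx
        rcases hx with rfl | hx
        · exact haS
        · exact hS'sub (hCsub i₀ (Finset.mem_filter.mp hx).1)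
      have hKchain : IsChain (· ≤ ·) (K : Set P) := by
        intro x hx y hy hxy
        simp only [hKdef, Finset.coe_insert, Set.mem_insert_iff, Finset.mem_coe,
          Finset.mem_filter] at hx hy
        rcases hx with rfl | hx <;> rcases hy with rfl | hy
        · exact absurd rfl hxy
        · exact Or.inr (hy.2.trans hi₀)
        · exact Or.inl (hx.2.trans hi₀)
        · exact (hCch i₀) (Finset.mem_coe.mpr hx.1) (Finset.mem_coe.mpr hy.1) hxy
      set S'' := S \ K with hS''def
      have hsub'' : S'' ⊆ S' := by
        intro x hx
        rw [hS''def, Finset.mem_sdiff] at hx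
        exact Finset.mem_erase.mpr ⟨fun e => hx.2 (e ▸ haK), hx.1⟩
      have hS''card : S''.card ≤ n := le_trans (Finset.card_le_card hsub'') hS'card
      have hnotK : ∀ x ∈ S'', x ∉ K := fun x hx => (Finset.mem_sdiff.mp hx).2
      have hbound'' : ∀ b : Finset P, b ⊆ S'' → IsAntichain (· ≤ ·) (b : Set P) →
          b.card ≤ w' - 1 := by
        intro b hb hanti
        have hbS' : b ⊆ S' := hb.trans hsub''
        have hle : b.card ≤ w' := hbound b hbS' hanti
        rcases eq_or_lt_of_le hle with heq | hlt
        · exfalso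
          obtain ⟨y, hyb, hyC⟩ := hmeet b hbS' hanti heq i₀
          have hyT : y ∈ T i₀ := Finset.mem_filter.mpr ⟨hyC, b, hbS', hanti, heq, hyb⟩
          have hyK : y ∈ K :=
            Finset.mem_insert.mpr (Or.inr (Finset.mem_filter.mpr ⟨hyC, hmtop i₀ y hyT⟩))
          exact hnotK y (hb hyb) hyK
        · omega
      obtain ⟨D, hDsub, hDch, hDdisj, hDcov⟩ := ih S'' hS''card (w' - 1) hbound''
      have hAw : A.card = w' := by rw [hw'def]; exact hAcard.symm
      have hwk : w' ≤ k := hAw ▸ hk A (hAsub.trans hS'sub) hAanti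
      have hKdisjD : ∀ i, Disjoint (D i) K :=
        fun i => Finset.disjoint_left.mpr (fun x hx hxK => hnotK x (hDsub _ hx) hxK)
      refine ⟨fun j => if h : (j : ℕ) < w' - 1 then D ⟨j, h⟩
        else if (j : ℕ) = w' - 1 then K else ∅, ?_, ?_, ?_, ?_⟩
      · intro j
        by_cases h : (j : ℕ) < w' - 1
        · simp only [dif_pos h]; exact (hDsub _).trans (Finset.sdiff_subset)
        · simp only [dif_neg h]
          by_cases h2 : (j : ℕ) = w' - 1
          · simp only [if_pos h2]; exact hKsub
          · simp only [if_neg h2]; simp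
      · intro j
        by_cases h : (j : ℕ) < w' - 1
        · simp only [dif_pos h]; exact hDch _
        · simp only [dif_neg h]
          by_cases h2 : (j : ℕ) = w' - 1
          · simp only [if_pos h2]; exact hKchain
          · simp only [if_neg h2]; simp [IsChain]
      · intro i j hij
        rcases lt_or_ge (i : ℕ) (w' - 1) with hi | hi <;>
          rcases lt_or_ge (j : ℕ) (w' - 1) with hj | hj
        · simp only [dif_pos hi, dif_pos hj]
          refine hDdisj _ _ ?_
          simp only [ne_eq, Fin.mk.injEq]
          exact fun e => hij (Fin.ext e)
        · simp only [dif_pos hi, dif_neg (not_lt.mpr hj)]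
          by_cases h2 : (j : ℕ) = w' - 1
          · simp only [if_pos h2]; exact hKdisjD _
          · simp only [if_neg h2]; simp
        · simp only [dif_neg (not_lt.mpr hi), dif_pos hj]
          by_cases h2 : (i : ℕ) = w' - 1
          · simp only [if_pos h2]; exact (hKdisjD _).symm
          · simp only [if_neg h2]; simp
        · simp only [dif_neg (not_lt.mpr hi), dif_neg (not_lt.mpr hj)]
          by_cases h2 : (i : ℕ) = w' - 1 <;> by_cases h3 : (j : ℕ) = w' - 1
          · exfalso; apply hij; apply Fin.ext; omega
          · simp only [if_pos h2, if_neg h3]; simp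
          · simp only [if_neg h2, if_pos h3]; simp
          · simp only [if_neg h2, if_neg h3]; simp
      · intro x hx
        by_cases hxK : x ∈ K
        · refine ⟨⟨w' - 1, by omega⟩, ?_⟩
          simp only [dif_neg (lt_irrefl (w' - 1)), if_pos rfl]
          exact hxK
        · have hx'' : x ∈ S'' := Finset.mem_sdiff.mpr ⟨hx, hxK⟩
          obtain ⟨i, hi⟩ := hDcov x hx''
          refine ⟨⟨i, by omega⟩, ?_⟩
          simp only [dif_pos (show ((⟨(i:ℕ), by omega⟩ : Fin k) : ℕ) < w' - 1 from i.2)]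
          exact hi
    · -- Case 1
      push_neg at hcase
      set A' : Finset P := insert a (Finset.univ.image m) with hA'def
      have hmne_a : ∀ i, m i ≠ a := fun i e => haS' (e ▸ hmS' i)
      have haimg : a ∉ Finset.univ.image m := by
        simp only [Finset.mem_image]
        rintro ⟨i, -, e⟩; exact hmne_a i e
      have hminj : Function.Injective m := by
        intro i j e
        by_contra hij
        exact (Finset.disjoint_left.mp (hCdisj i j hij) (hmC i)) (e ▸ hmC j)
      have hA'card : A'.card = w' + 1 := by
        rw [hA'def, Finset.card_insert_of_notMem haimg,
          Finset.card_image_of_injective _ hminj]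
        simp
      have hA'sub : A' ⊆ S := by
        intro x hx
        rw [hA'def, Finset.mem_insert] at hx
        rcases hx with rfl | hx
        · exact haS
        · obtain ⟨i, -, rfl⟩ := Finset.mem_image.mp hx
          exact hS'sub (hmS' i)
      have hA'anti : IsAntichain (· ≤ ·) (A' : Set P) := by
        intro x hx y hy hxy hle
        simp only [hA'def, Finset.coe_insert, Set.mem_insert_iff, Finset.coe_image,
          Set.mem_image, Finset.mem_coe, Finset.mem_univ] at hx hy
        rcases hx with rfl | ⟨i, -, rfl⟩
        · rcases hy with rfl | ⟨j, -, rfl⟩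
          · exact hxy rfl
          · exact hxy (le_antisymm hle (hamax (hS'sub (hmS' j)) hle))
        · rcases hy with rfl | ⟨j, -, rfl⟩
          · exact hcase i hle
          · have hij : i ≠ j := fun e => hxy (e ▸ rfl)
            exact hkey i j hij hle
      have hw1k : w' + 1 ≤ k := hA'card ▸ hk A' hA'sub hA'anti
      refine ⟨fun j => if h : (j : ℕ) < w' then C ⟨j, h⟩ else if (j : ℕ) = w' then {a} else ∅,
        ?_, ?_, ?_, ?_⟩
      · intro j
        by_cases h : (j : ℕ) < w'
        · simp only [dif_pos h]; exact (hCsub _).trans hS'sub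
        · simp only [dif_neg h]
          by_cases h2 : (j : ℕ) = w'
          · simp only [if_pos h2]; simpa using haS
          · simp only [if_neg h2]; simp
      · intro j
        by_cases h : (j : ℕ) < w'
        · simp only [dif_pos h]; exact hCch _
        · simp only [dif_neg h]
          by_cases h2 : (j : ℕ) = w'
          · simp only [if_pos h2]; simp [IsChain, Set.Pairwise]
          · simp only [if_neg h2]; simp [IsChain]
      · intro i j hij
        rcases lt_or_ge (i : ℕ) w' with hi | hi <;> rcases lt_or_ge (j : ℕ) w' with hj | hj
        · simp only [dif_pos hi, dif_pos hj]
          refine hCdisj _ _ ?_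
          simp only [ne_eq, Fin.mk.injEq]
          exact fun e => hij (Fin.ext e)
        · simp only [dif_pos hi, dif_neg (not_lt.mpr hj)]
          by_cases h2 : (j : ℕ) = w'
          · simp only [if_pos h2]
            exact Finset.disjoint_singleton_right.mpr (fun h => haS' (hCsub _ h))
          · simp only [if_neg h2]; simp
        · simp only [dif_neg (not_lt.mpr hi), dif_pos hj]
          by_cases h2 : (i : ℕ) = w'
          · simp only [if_pos h2]
            exact Finset.disjoint_singleton_left.mpr (fun h => haS' (hCsub _ h))
          · simp only [if_neg h2]; simp
        · simp only [dif_neg (not_lt.mpr hi), dif_neg (not_lt.mpr hj)]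
          by_cases h2 : (i : ℕ) = w' <;> by_cases h3 : (j : ℕ) = w'
          · exfalso; apply hij; apply Fin.ext; omega
          · simp only [if_pos h2, if_neg h3]; simp
          · simp only [if_neg h2, if_pos h3]; simp
          · simp only [if_neg h2, if_neg h3]; simp
      · intro x hx
        rcases eq_or_ne x a with rfl | hxa
        · refine ⟨⟨w', by omega⟩, ?_⟩
          simp
        · have hx' : x ∈ S' := Finset.mem_erase.mpr ⟨hxa, hx⟩
          obtain ⟨i, hi⟩ := hCcov x hx'
          refine ⟨⟨i, by omega⟩, ?_⟩
          simp only [dif_pos (show ((⟨(i:ℕ), by omega⟩ : Fin k) : ℕ) < w' from i.2)]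
          exact hi
  
end Dilworth

theorem dilworth_partition_into_chains
    {P : Type*} [Fintype P] [PartialOrder P] (w : ℕ)
    (hw : IsGreatest
      {n : ℕ | ∃ a : Finset P, IsAntichain (· ≤ ·) (a : Set P) ∧ a.card = n} w) :
    ∃ C : Fin w → Finset P,
      (∀ i, (C i).Nonempty) ∧
      (∀ i, IsChain (· ≤ ·) ((C i : Set P))) ∧
      (∀ i j, i ≠ j → Disjoint (C i) (C j)) ∧
      (∀ x : P, ∃ i, x ∈ C i) := by
  classical
  obtain ⟨⟨A, hAanti, hAcard⟩, hub⟩ := hw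
  obtain ⟨C, hCsub, hCch, hCdisj, hCcov⟩ := dil (Finset.univ : Finset P).card Finset.univ le_rfl w
    (fun a _ hanti => hub ⟨a, hanti, rfl⟩)
  have hcov' : ∀ x : P, ∃ i, x ∈ C i := fun x => hCcov x (Finset.mem_univ x)
  have hmeet := meets_all hCch hCdisj hCcov (A.subset_univ) hAanti hAcard
  refine ⟨C, fun i => ?_, hCch, hCdisj, hcov'⟩
  obtain ⟨x, -, hx⟩ := hmeet i
  exact ⟨x, hx⟩
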